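/- arXiv:2107.05544 — 4 statements merged into one kernel-verified Lean document; each statement's English description precedes it below -/
import Mathlib

section
/- If ℓ : ℝ^{D_u} × U → ℝ satisfies the optimal stationarity condition (for all u ∈ U and q ∈ ℝ^{D_u}, ∇_q ℓ(q,u) exists and ∇_q ℓ(q,u) = 0 implies ℓ(q,u) ≤ ℓ(q',u) for all q'), and θ is a stationary point of L(θ) = (1/N) Σ_{i=1}^N ℓ(û_θ(x_i), u_i) at which the Jacobian ∂û_X(θ)/∂θ has full row rank N·D_u, then θ is a global minimum of L. -/
open scoped BigOperators RealInnerProductSpace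

noncomputable section

/-- If the loss `ℓ` satisfies the optimal stationarity condition, then any
stationary point `θ` of `L(θ) = (1/N) Σᵢ ℓ(û_θ(xᵢ), uᵢ)` at which the Jacobian of the stacked
output map has full row rank `N·Du` is a global minimum of `L`. -/
theorem optimal_stationarity_implies_global_min
    {Du N Dθ : ℕ} (hN : 0 < N)
    (U : Set (EuclideanSpace ℝ (Fin Du)))
    (ℓ : EuclideanSpace ℝ (Fin Du) → EuclideanSpace ℝ (Fin Du) → ℝ)
    (u : Fin N → EuclideanSpace ℝ (Fin Du)) (hu : ∀ i, u i ∈ U)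
    (model : EuclideanSpace ℝ (Fin Dθ) → Fin N → EuclideanSpace ℝ (Fin Du))
    (hmodel : ∀ i, Differentiable ℝ fun θ => model θ i)
    (hosc : ∀ v ∈ U, ∀ q : EuclideanSpace ℝ (Fin Du),
      DifferentiableAt ℝ (fun p => ℓ p v) q ∧
        (gradient (fun p => ℓ p v) q = 0 → ∀ q', ℓ q v ≤ ℓ q' v))
    (L : EuclideanSpace ℝ (Fin Dθ) → ℝ)
    (hL : L = fun θ => (1 / (N : ℝ)) * ∑ i, ℓ (model θ i) (u i))
    (θ : EuclideanSpace ℝ (Fin Dθ))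
    (hstat : gradient L θ = 0)
    (hrank : LinearMap.rank
        (fderiv ℝ (fun θ' => (fun i => model θ' i)) θ).toLinearMap
        = ((N * Du : ℕ) : Cardinal)) :
    ∀ θ', L θ ≤ L θ' := by
  intro θ'
  -- derivatives of the model components and of the loss
  set D : Fin N → (EuclideanSpace ℝ (Fin Dθ) →L[ℝ] EuclideanSpace ℝ (Fin Du)) :=
    fun i => fderiv ℝ (fun θ'' => model θ'' i) θ with hDdef
  set G : Fin N → (EuclideanSpace ℝ (Fin Du) →L[ℝ] ℝ) :=
    fun i => fderiv ℝ (fun p => ℓ p (u i)) (model θ i) with hGdef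
  have hdiffℓ : ∀ i, DifferentiableAt ℝ (fun p => ℓ p (u i)) (model θ i) :=
    fun i => (hosc (u i) (hu i) (model θ i)).1
  have hfi : ∀ i : Fin N, DifferentiableAt ℝ (fun θ'' => ℓ (model θ'' i) (u i)) θ :=
    fun i => by have := (hdiffℓ i).comp θ ((hmodel i) θ); exact this
  -- fderiv of L at θ vanishes
  have hfL : fderiv ℝ L θ = 0 := by
    have h := hstat
    rw [gradient] at h
    have := congrArg (InnerProductSpace.toDual ℝ (EuclideanSpace ℝ (Fin Dθ))) h
    simpa using this
  -- compute fderiv of L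
  have hsumdiff : DifferentiableAt ℝ (fun θ'' => ∑ i, ℓ (model θ'' i) (u i)) θ := by
    exact DifferentiableAt.fun_sum fun i _ => hfi i
  have hfLcomp : fderiv ℝ L θ =
      (1 / (N : ℝ)) • ∑ i, (G i).comp (D i) := by
    rw [hL]
    rw [fderiv_const_mul hsumdiff]
    congr 1
    rw [fderiv_fun_sum (fun i _ => hfi i)]
    refine Finset.sum_congr rfl fun i _ => ?_
    have : (fun θ'' => ℓ (model θ'' i) (u i)) =
        (fun p => ℓ p (u i)) ∘ (fun θ'' => model θ'' i) := rfl
    rw [this, fderiv_comp θ (hdiffℓ i) ((hmodel i) θ)]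
  have hkey : ∀ w, ∑ i, G i (D i w) = 0 := by
    have hN' : (1 / (N : ℝ)) ≠ 0 := by
      have : (N : ℝ) ≠ 0 := Nat.cast_ne_zero.mpr hN.ne'
      simp [this]
    have hz : (1 / (N : ℝ)) • ∑ i, (G i).comp (D i) = 0 := hfLcomp.symm.trans hfL
    have hsum : ∑ i, (G i).comp (D i) = 0 := by
      rcases smul_eq_zero.mp hz with h | h
      · exact absurd h hN'
      · exact h
    intro w
    have := congrArg (fun (T : EuclideanSpace ℝ (Fin Dθ) →L[ℝ] ℝ) => T w) hsum
    simpa using this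
  -- surjectivity of the stacked Jacobian
  set J : EuclideanSpace ℝ (Fin Dθ) →L[ℝ] (Fin N → EuclideanSpace ℝ (Fin Du)) :=
    fderiv ℝ (fun θ'' => (fun i => model θ'' i)) θ with hJdef
  have hJpi : J = ContinuousLinearMap.pi D := by
    rw [hJdef]
    exact fderiv_pi fun i => (hmodel i) θ
  have hsurj : Function.Surjective J := by
    have h1 : Module.finrank ℝ (LinearMap.range J.toLinearMap) = N * Du :=
      Module.finrank_eq_of_rank_eq hrank
    have h2 : LinearMap.range J.toLinearMap = ⊤ := by
      apply Submodule.eq_top_of_finrank_eq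
      rw [h1]
      simp [Module.finrank_pi_fintype, finrank_euclideanSpace, Finset.sum_const, mul_comm]
    have := LinearMap.range_eq_top.mp h2
    exact this
  -- each partial gradient vanishes
  have hGzero : ∀ i, G i = 0 := by
    intro i
    ext y
    obtain ⟨w, hw⟩ := hsurj (Pi.single (M := fun _ : Fin N => EuclideanSpace ℝ (Fin Du)) i y)
    have hw' : ∀ j, D j w = Pi.single (M := fun _ : Fin N => EuclideanSpace ℝ (Fin Du)) i y j := by
      intro j
      have := congrFun hw j
      rw [hJpi] at this
      simpa using this
    have h := hkey w
    rw [Finset.sum_eq_single i (fun j _ hj => by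
        rw [hw' j, Pi.single_eq_of_ne hj, map_zero]) (by simp)] at h
    rw [hw' i, Pi.single_eq_same] at h
    simpa using h
  have hmin : ∀ i, ∀ q', ℓ (model θ i) (u i) ≤ ℓ q' (u i) := by
    intro i
    apply (hosc (u i) (hu i) (model θ i)).2
    rw [gradient]
    have : fderiv ℝ (fun p => ℓ p (u i)) (model θ i) = 0 := hGzero i
    rw [this]
    simp
  rw [hL]
  simp only
  have hs : ∑ i, ℓ (model θ i) (u i) ≤ ∑ i, ℓ (model θ' i) (u i) :=
    Finset.sum_le_sum fun i _ => hmin i (model θ' i)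
  have hnn : (0:ℝ) ≤ 1 / (N:ℝ) := by positivity
  exact mul_le_mul_of_nonneg_left hs hnn
end
end

section
/- Suppose ℓ fails the optimal stationarity condition: there exist u ∈ U and q ∈ ℝ^{D_u} with ∇_q ℓ(q,u) = 0 but ℓ(q,u) > ℓ(q',u) for some q'. If the model is fully expressive, i.e. {û_X(θ) : θ ∈ ℝ^{D_θ}} = ℝ^{N D_u}, then there exists a stationary point θ of L that is not a global minimum of L. -/
open scoped BigOperators RealInnerProductSpace

noncomputable section

/-- If the loss `ℓ` fails the optimal stationarity condition at some `u ∈ U`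
(there is `q` with `∇_q ℓ(q,u) = 0` but `ℓ(q,u) > ℓ(q',u)` for some `q'`), and the model is
fully expressive (the stacked output map is surjective onto `ℝ^{N·Du}`), then the objective
`L(θ) = (1/N) Σᵢ ℓ(û_θ(xᵢ), u)` (data targets all equal to the witnessing `u`) has a
stationary point that is not a global minimum. -/
theorem failure_of_optimal_stationarity_gives_bad_stationary_point
    {Du N Dθ : ℕ} (hN : 0 < N)
    (U : Set (EuclideanSpace ℝ (Fin Du)))
    (ℓ : EuclideanSpace ℝ (Fin Du) → EuclideanSpace ℝ (Fin Du) → ℝ)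
    (hdiff : ∀ (v q : EuclideanSpace ℝ (Fin Du)), DifferentiableAt ℝ (fun p => ℓ p v) q)
    (u : EuclideanSpace ℝ (Fin Du)) (hu : u ∈ U)
    (hfail : ∃ q : EuclideanSpace ℝ (Fin Du),
      gradient (fun p => ℓ p u) q = 0 ∧ ∃ q', ℓ q' u < ℓ q u)
    (model : EuclideanSpace ℝ (Fin Dθ) → Fin N → EuclideanSpace ℝ (Fin Du))
    (hmodel : ∀ i, Differentiable ℝ fun θ => model θ i)
    (hsurj : Function.Surjective (fun θ => (fun i => model θ i) :
      EuclideanSpace ℝ (Fin Dθ) → (Fin N → EuclideanSpace ℝ (Fin Du))))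
    (L : EuclideanSpace ℝ (Fin Dθ) → ℝ)
    (hL : L = fun θ => (1 / (N : ℝ)) * ∑ i, ℓ (model θ i) u) :
    ∃ θ, gradient L θ = 0 ∧ ∃ θ', L θ' < L θ := by
  obtain ⟨q, hgq, q', hlt⟩ := hfail
  obtain ⟨θ, hθ⟩ := hsurj (fun _ => q)
  obtain ⟨θ', hθ'⟩ := hsurj (fun _ => q')
  have hθi : ∀ i, model θ i = q := fun i => congrFun hθ i
  have hθ'i : ∀ i, model θ' i = q' := fun i => congrFun hθ' i
  have hfq : fderiv ℝ (fun p => ℓ p u) q = 0 := by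
    have := congrArg (InnerProductSpace.toDual ℝ (EuclideanSpace ℝ (Fin Du))) hgq
    simpa [gradient] using this
  have hterm : ∀ i : Fin N, HasFDerivAt (fun θ0 => ℓ (model θ0 i) u)
      (0 : EuclideanSpace ℝ (Fin Dθ) →L[ℝ] ℝ) θ := by
    intro i
    have h1 : HasFDerivAt (fun p => ℓ p u) (0 : EuclideanSpace ℝ (Fin Du) →L[ℝ] ℝ)
        (model θ i) := by
      rw [hθi i]
      simpa [hfq] using (hdiff u q).hasFDerivAt
    simpa [Function.comp_def] using h1.comp θ (hmodel i θ).hasFDerivAt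
  have hsum : HasFDerivAt (fun θ0 => ∑ i, ℓ (model θ0 i) u)
      (0 : EuclideanSpace ℝ (Fin Dθ) →L[ℝ] ℝ) θ := by
    simpa using HasFDerivAt.fun_sum (fun i (_ : i ∈ Finset.univ) => hterm i)
  have hLd : HasFDerivAt L (0 : EuclideanSpace ℝ (Fin Dθ) →L[ℝ] ℝ) θ := by
    rw [hL]
    simpa using hsum.const_mul (1 / (N : ℝ))
  refine ⟨θ, ?_, θ', ?_⟩
  · rw [gradient, hLd.fderiv, map_zero]
  · have hNR : (0 : ℝ) < (N : ℝ) := by exact_mod_cast hN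
    rw [hL]
    simp only [hθi, hθ'i, Finset.sum_const, Finset.card_univ, Fintype.card_fin, nsmul_eq_mul]
    have := mul_lt_mul_of_pos_left hlt hNR
    exact mul_lt_mul_of_pos_left this (by positivity)
end
end

section
/- If ℓ satisfies both the optimal stationarity condition and the MSE relation condition (∇_q ℓ(q,u) = 0 if and only if q = u), then any stationary point θ of L at which rank(∂û_X(θ)/∂θ) = N D_u is a global minimum of the mean squared error loss L_MSE(θ) = (1/N) Σ_{i=1}^N ‖û_θ(x_i) − u_i‖₂², i.e. L_MSE(θ) = 0. -/
open scoped BigOperators RealInnerProductSpace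

noncomputable section

set_option maxHeartbeats 1000000 in
/-- If the loss `ℓ` satisfies both the optimal stationarity condition and the
MSE relation condition (`∇_q ℓ(q,u) = 0 ↔ q = u`), then any stationary point `θ` of `L` at
which the Jacobian of the stacked output map has full row rank `N·Du` is a global minimum of
the mean squared error loss, i.e. `L_MSE(θ) = 0`. -/
theorem stationary_point_is_global_min_of_MSE
    {Du N Dθ : ℕ} (hN : 0 < N)
    (U : Set (EuclideanSpace ℝ (Fin Du)))
    (ℓ : EuclideanSpace ℝ (Fin Du) → EuclideanSpace ℝ (Fin Du) → ℝ)
    (u : Fin N → EuclideanSpace ℝ (Fin Du)) (hu : ∀ i, u i ∈ U)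
    (model : EuclideanSpace ℝ (Fin Dθ) → Fin N → EuclideanSpace ℝ (Fin Du))
    (hmodel : ∀ i, Differentiable ℝ fun θ => model θ i)
    (hosc : ∀ v ∈ U, ∀ q : EuclideanSpace ℝ (Fin Du),
      DifferentiableAt ℝ (fun p => ℓ p v) q ∧
        (gradient (fun p => ℓ p v) q = 0 → ∀ q', ℓ q v ≤ ℓ q' v))
    (hmse : ∀ v ∈ U, ∀ q : EuclideanSpace ℝ (Fin Du),
      gradient (fun p => ℓ p v) q = 0 ↔ q = v)
    (L : EuclideanSpace ℝ (Fin Dθ) → ℝ)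
    (hL : L = fun θ => (1 / (N : ℝ)) * ∑ i, ℓ (model θ i) (u i))
    (θ : EuclideanSpace ℝ (Fin Dθ))
    (hstat : gradient L θ = 0)
    (hrank : LinearMap.rank
        (fderiv ℝ (fun θ' => (fun i => model θ' i)) θ).toLinearMap
        = ((N * Du : ℕ) : Cardinal)) :
    (1 / (N : ℝ)) * ∑ i, ‖model θ i - u i‖ ^ 2 = 0 := by
  classical
  -- the per-sample gradients
  set g : Fin N → EuclideanSpace ℝ (Fin Du) :=
    fun i => gradient (fun p => ℓ p (u i)) (model θ i) with hg
  have hdℓ : ∀ i, DifferentiableAt ℝ (fun p => ℓ p (u i)) (model θ i) :=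
    fun i => (hosc (u i) (hu i) (model θ i)).1
  -- the fderiv of ℓ(·, u i) is given by the inner product with g i
  have hfℓ : ∀ i (w : EuclideanSpace ℝ (Fin Du)),
      fderiv ℝ (fun p => ℓ p (u i)) (model θ i) w = ⟪g i, w⟫ := by
    intro i w
    have : (InnerProductSpace.toDual ℝ (EuclideanSpace ℝ (Fin Du))) (g i)
        = fderiv ℝ (fun p => ℓ p (u i)) (model θ i) := by
      simp [hg, gradient]
    rw [← this, InnerProductSpace.toDual_apply_apply]
  -- differentiability of each summand
  have hdi : ∀ i, DifferentiableAt ℝ (fun θ' => ℓ (model θ' i) (u i)) θ :=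
    fun i => DifferentiableAt.fun_comp' (x := θ) (hdℓ i) ((hmodel i) θ)
  -- fderiv L θ = 0
  have hF0 : fderiv ℝ L θ = 0 := by
    have : (InnerProductSpace.toDual ℝ (EuclideanSpace ℝ (Fin Dθ))) (gradient L θ)
        = fderiv ℝ L θ := by simp [gradient]
    rw [← this, hstat, map_zero]
  -- the chain-rule formula for fderiv L
  have hcomp : ∀ i, fderiv ℝ (fun θ' => ℓ (model θ' i) (u i)) θ
      = (fderiv ℝ (fun p => ℓ p (u i)) (model θ i)).comp
          (fderiv ℝ (fun θ' => model θ' i) θ) :=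
    fun i => fderiv_fun_comp θ (hdℓ i) ((hmodel i) θ)
  have hFL : ∀ v : EuclideanSpace ℝ (Fin Dθ),
      (0 : ℝ) = (1 / (N : ℝ)) *
        ∑ i, ⟪g i, fderiv ℝ (fun θ' => model θ' i) θ v⟫ := by
    intro v
    have h1 : fderiv ℝ L θ = (1 / (N : ℝ)) •
        ∑ i, fderiv ℝ (fun θ' => ℓ (model θ' i) (u i)) θ := by
      rw [hL]
      rw [show (fun θ => (1 / (N : ℝ)) * ∑ i, ℓ (model θ i) (u i))
          = fun θ => (1 / (N : ℝ)) * (fun θ => ∑ i, ℓ (model θ i) (u i)) θ from rfl]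
      rw [fderiv_const_mul (by exact DifferentiableAt.fun_sum fun i _ => hdi i)]
      rw [fderiv_fun_sum fun i _ => hdi i]
    have h2 := congrArg (fun (T : EuclideanSpace ℝ (Fin Dθ) →L[ℝ] ℝ) => T v) (hF0.symm.trans h1)
    simp only [ContinuousLinearMap.zero_apply, ContinuousLinearMap.smul_apply,
      ContinuousLinearMap.sum_apply, smul_eq_mul] at h2
    rw [h2]
    congr 1
    refine Finset.sum_congr rfl fun i _ => ?_
    rw [hcomp i, ContinuousLinearMap.comp_apply, hfℓ i]
  -- surjectivity of the stacked Jacobian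
  set F := fderiv ℝ (fun θ' => (fun i => model θ' i)) θ with hFdef
  have hsurj : Function.Surjective F := by
    have : LinearMap.range F.toLinearMap = ⊤ := by
      apply Submodule.eq_top_of_finrank_eq
      have hfr : Module.finrank ℝ (LinearMap.range F.toLinearMap) = N * Du := by
        have h := congrArg Cardinal.toNat hrank
        simpa [Module.finrank, LinearMap.rank] using h
      rw [hfr]
      rw [Module.finrank_pi_fintype ℝ (M := fun _ : Fin N => EuclideanSpace ℝ (Fin Du))]
      simp [finrank_euclideanSpace, mul_comm]
    exact LinearMap.range_eq_top.mp this
  obtain ⟨v, hv⟩ := hsurj g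
  -- components of F
  have hFpi : ∀ i, F v i = fderiv ℝ (fun θ' => model θ' i) θ v := by
    intro i
    rw [hFdef, fderiv_pi fun i => (hmodel i) θ]
    rfl
  -- conclude each g i = 0
  have hsum : (0 : ℝ) = (1 / (N : ℝ)) * ∑ i, ‖g i‖ ^ 2 := by
    have := hFL v
    rw [this]
    congr 1
    refine Finset.sum_congr rfl fun i _ => ?_
    rw [← hFpi i, hv, real_inner_self_eq_norm_sq]
  have hNpos : (0 : ℝ) < 1 / (N : ℝ) := by positivity
  have hsum0 : ∑ i, ‖g i‖ ^ 2 = 0 := by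
    have := hsum.symm
    rcases mul_eq_zero.mp this with h | h
    · exact absurd h (ne_of_gt hNpos)
    · exact h
  have hgz : ∀ i, g i = 0 := by
    intro i
    have h := (Finset.sum_eq_zero_iff_of_nonneg
      (fun i _ => by positivity)).mp hsum0 i (Finset.mem_univ i)
    have : ‖g i‖ = 0 := by nlinarith [norm_nonneg (g i)]
    exact norm_eq_zero.mp this
  have hmu : ∀ i, model θ i = u i := fun i => (hmse (u i) (hu i) (model θ i)).mp (hgz i)
  have : ∑ i, ‖model θ i - u i‖ ^ 2 = 0 := by
    refine Finset.sum_eq_zero fun i _ => ?_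
    rw [hmu i]
    simp
  rw [this, mul_zero]
end
end

section
/- Under Assumption A with L-Lipschitz gradient and nonnegative L, if the learning rates satisfy ε^{(r)} → 0 and Σ_r ε^{(r)} = ∞, then the gradient descent-type iterates θ^{(r+1)} = θ^{(r)} − ε^{(r)} ḡ^{(r)} satisfy lim_{r→∞} ∇L(θ^{(r)}) = 0. -/
open Filter

noncomputable section

variable {E : Type*} [NormedAddCommGroup E] [InnerProductSpace ℝ E] [CompleteSpace E]

lemma hasDerivAt_comp_line (L : E → ℝ) (hdiff : Differentiable ℝ L) (x v : E) (t : ℝ) :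
    HasDerivAt (fun s : ℝ => L (x + s • v)) (inner ℝ (gradient L (x + t • v)) v : ℝ) t := by
  have h1 : HasDerivAt (fun s : ℝ => x + s • v) v t := by
    simpa using ((hasDerivAt_id t).smul_const v).const_add x
  have h2 := (hdiff (x + t • v)).hasGradientAt.hasFDerivAt
  have := h2.comp_hasDerivAt t h1
  simpa [Function.comp_def] using this

lemma descent_lemma (L : E → ℝ) (hdiff : Differentiable ℝ L) (Lc : ℝ) (hLc : 0 ≤ Lc)
    (hlip : ∀ θ θ', ‖gradient L θ - gradient L θ'‖ ≤ Lc * ‖θ - θ'‖) (x v : E) :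
    L (x + v) ≤ L x + (inner ℝ (gradient L x) v : ℝ) + Lc / 2 * ‖v‖ ^ 2 := by
  set φ : ℝ → ℝ := fun t => L (x + t • v) - t * (inner ℝ (gradient L x) v : ℝ)
    - Lc / 2 * t ^ 2 * ‖v‖ ^ 2 with hφ
  have hder : ∀ t : ℝ, HasDerivAt φ
      ((inner ℝ (gradient L (x + t • v)) v : ℝ) - (inner ℝ (gradient L x) v : ℝ)
        - Lc * t * ‖v‖ ^ 2) t := by
    intro t
    have h1 := hasDerivAt_comp_line L hdiff x v t
    have h2 : HasDerivAt (fun t : ℝ => t * (inner ℝ (gradient L x) v : ℝ))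
        (inner ℝ (gradient L x) v : ℝ) t := by
      simpa using (hasDerivAt_id t).mul_const (inner ℝ (gradient L x) v : ℝ)
    have h3 : HasDerivAt (fun t : ℝ => Lc / 2 * t ^ 2 * ‖v‖ ^ 2)
        (Lc * t * ‖v‖ ^ 2) t := by
      have : HasDerivAt (fun t : ℝ => t ^ 2) (2 * t) t := by
        simpa using hasDerivAt_pow 2 t
      have := (this.const_mul (Lc / 2)).mul_const (‖v‖ ^ 2)
      rw [show Lc * t * ‖v‖ ^ 2 = Lc / 2 * (2 * t) * ‖v‖ ^ 2 by ring]
      exact this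
    exact (h1.sub h2).sub h3
  have hanti : AntitoneOn φ (Set.Icc (0:ℝ) 1) := by
    apply antitoneOn_of_deriv_nonpos (convex_Icc 0 1)
    · exact (Differentiable.continuous (fun t => (hder t).differentiableAt)).continuousOn
    · exact fun t _ => ((hder t).differentiableAt).differentiableWithinAt
    · intro t ht
      rw [interior_Icc] at ht
      rw [(hder t).deriv]
      have hb : (inner ℝ (gradient L (x + t • v)) v : ℝ) - (inner ℝ (gradient L x) v : ℝ)
          ≤ Lc * t * ‖v‖ ^ 2 := by
        calc (inner ℝ (gradient L (x + t • v)) v : ℝ) - (inner ℝ (gradient L x) v : ℝ)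
            = (inner ℝ (gradient L (x + t • v) - gradient L x) v : ℝ) := by
              rw [inner_sub_left]
          _ ≤ ‖gradient L (x + t • v) - gradient L x‖ * ‖v‖ := real_inner_le_norm _ _
          _ ≤ (Lc * ‖(x + t • v) - x‖) * ‖v‖ := by
              gcongr; exact hlip _ _
          _ = Lc * (‖t • v‖ * ‖v‖) := by rw [add_sub_cancel_left]; ring
          _ ≤ Lc * (t * ‖v‖ * ‖v‖) := by
              gcongr
              rw [norm_smul]
              gcongr
              rw [Real.norm_eq_abs, abs_of_pos ht.1]
          _ = Lc * t * ‖v‖ ^ 2 := by ring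
      linarith
  have := hanti (Set.mem_Icc.2 ⟨le_refl 0, zero_le_one⟩)
    (Set.mem_Icc.2 ⟨zero_le_one, le_refl 1⟩) zero_le_one
  simp only [hφ] at this
  simp only [zero_smul, one_smul, add_zero, zero_mul, sub_zero, zero_pow, mul_zero,
    one_mul, one_pow, mul_one] at this
  linarith

set_option maxHeartbeats 1000000 in
/-- Under Assumption A, with `∇L` Lipschitz and `L` nonnegative, if the
learning rates satisfy `εᵣ → 0` and `Σᵣ εᵣ = ∞`, then the iterates
`θ_{r+1} = θᵣ − εᵣ ḡᵣ` satisfy `∇L(θᵣ) → 0`. -/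
theorem gd_diminishing_rate_gradient_tendsto_zero
    {Dθ : ℕ} (L : EuclideanSpace ℝ (Fin Dθ) → ℝ)
    (hdiff : Differentiable ℝ L) (hnonneg : ∀ θ, 0 ≤ L θ)
    (Lc : ℝ) (hLc : 0 ≤ Lc)
    (hlip : ∀ θ θ', ‖gradient L θ - gradient L θ'‖ ≤ Lc * ‖θ - θ'‖)
    (θ g : ℕ → EuclideanSpace ℝ (Fin Dθ)) (ε : ℕ → ℝ)
    (cl cu : ℝ) (hcl : 0 < cl) (hcu : 0 < cu)
    (hA1 : ∀ r, cl * ‖gradient L (θ r)‖ ^ 2 ≤ (inner ℝ (gradient L (θ r)) (g r) : ℝ))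
    (hA2 : ∀ r, ‖g r‖ ^ 2 ≤ cu * ‖gradient L (θ r)‖ ^ 2)
    (hupd : ∀ r, θ (r + 1) = θ r - ε r • g r)
    (hεpos : ∀ r, 0 ≤ ε r)
    (hε0 : Tendsto ε atTop (nhds 0))
    (hεsum : Tendsto (fun n => ∑ r ∈ Finset.range n, ε r) atTop atTop) :
    Tendsto (fun r => gradient L (θ r)) atTop (nhds 0) := by
  classical
  set a : ℕ → ℝ := fun r => ‖gradient L (θ r)‖ with ha
  have ha0 : ∀ r, 0 ≤ a r := fun r => norm_nonneg _
  -- Step B : one-step descent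
  have hB : ∀ r, L (θ (r+1)) ≤ L (θ r) - ε r * cl * a r ^ 2
      + Lc / 2 * (ε r ^ 2 * (cu * a r ^ 2)) := by
    intro r
    have hd := descent_lemma L hdiff Lc hLc hlip (θ r) (-(ε r • g r))
    rw [← sub_eq_add_neg] at hd
    rw [hupd r]
    have h1 : (inner ℝ (gradient L (θ r)) (-(ε r • g r)) : ℝ)
        = -(ε r * (inner ℝ (gradient L (θ r)) (g r) : ℝ)) := by
      rw [inner_neg_right, real_inner_smul_right]
    have h2 : ‖-(ε r • g r)‖ ^ 2 = ε r ^ 2 * ‖g r‖ ^ 2 := by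
      rw [norm_neg, norm_smul, Real.norm_eq_abs, mul_pow, sq_abs]
    rw [h1, h2] at hd
    have h3 : ε r * (cl * a r ^ 2) ≤ ε r * (inner ℝ (gradient L (θ r)) (g r) : ℝ) :=
      mul_le_mul_of_nonneg_left (hA1 r) (hεpos r)
    have h4 : ε r ^ 2 * ‖g r‖ ^ 2 ≤ ε r ^ 2 * (cu * a r ^ 2) :=
      mul_le_mul_of_nonneg_left (hA2 r) (sq_nonneg _)
    nlinarith [hd]
  -- Step C : eventually ε is small enough for clean descent
  obtain ⟨R0, hR0⟩ : ∃ R0, ∀ r, R0 ≤ r → ε r ≤ cl / (Lc * cu + 1) := by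
    have hpos : (0:ℝ) < cl / (Lc * cu + 1) := by positivity
    exact eventually_atTop.1 (hε0.eventually (eventually_le_nhds hpos))
  have hC : ∀ r, R0 ≤ r → L (θ (r+1)) ≤ L (θ r) - cl / 2 * (ε r * a r ^ 2) := by
    intro r hr
    have h1 : ε r * (Lc * cu + 1) ≤ cl := by
      have := hR0 r hr
      rw [le_div_iff₀ (by positivity)] at this
      linarith [this]
    have h2 : Lc * cu * ε r ≤ cl := by nlinarith [hεpos r, mul_nonneg hLc hcu.le]
    have hB' := hB r
    nlinarith [mul_nonneg (hεpos r) (sq_nonneg (a r)), sq_nonneg (a r),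
      mul_nonneg (mul_nonneg (hεpos r) (sq_nonneg (a r))) (sub_nonneg.2 h2)]
  -- telescoping
  have hT : ∀ n, R0 ≤ n →
      ∑ r ∈ Finset.Ico R0 n, cl / 2 * (ε r * a r ^ 2) ≤ L (θ R0) - L (θ n) := by
    intro n hn
    induction n, hn using Nat.le_induction with
    | base => simp
    | succ n hn ih =>
      rw [Finset.sum_Ico_succ_top hn]
      have := hC n hn
      linarith
  -- Step D : summability of ε r * a r ^ 2
  have hsum : Summable (fun r => ε r * a r ^ 2) := by
    apply summable_of_sum_range_le
      (c := (∑ r ∈ Finset.range R0, ε r * a r ^ 2) + 2 / cl * L (θ R0))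
    · intro r; exact mul_nonneg (hεpos r) (sq_nonneg _)
    · intro n
      rcases le_or_gt n R0 with h | h
      · have h1 : ∑ r ∈ Finset.range n, ε r * a r ^ 2
            ≤ ∑ r ∈ Finset.range R0, ε r * a r ^ 2 := by
          apply Finset.sum_le_sum_of_subset_of_nonneg (Finset.range_subset_range.2 h)
          intro i _ _; exact mul_nonneg (hεpos i) (sq_nonneg _)
        have h2 : 0 ≤ 2 / cl * L (θ R0) :=
          mul_nonneg (by positivity) (hnonneg _)
        linarith
      · have hsplit := Finset.sum_range_add_sum_Ico (fun r => ε r * a r ^ 2) h.le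
        have h1 := hT n h.le
        have h2 : ∑ r ∈ Finset.Ico R0 n, ε r * a r ^ 2
            ≤ 2 / cl * L (θ R0) := by
          have h3 : ∑ r ∈ Finset.Ico R0 n, cl / 2 * (ε r * a r ^ 2) ≤ L (θ R0) := by
            have := hnonneg (θ n); linarith
          rw [← Finset.mul_sum] at h3
          calc ∑ r ∈ Finset.Ico R0 n, ε r * a r ^ 2
              ≤ L (θ R0) / (cl / 2) :=
                (le_div_iff₀ (by positivity)).2 (by rw [mul_comm]; exact h3)
            _ = 2 / cl * L (θ R0) := by field_simp
        linarith
  set T : ℝ := ∑' r, ε r * a r ^ 2 with hTdef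
  have hS_le : ∀ n, ∑ r ∈ Finset.range n, ε r * a r ^ 2 ≤ T :=
    fun n => Summable.sum_le_tsum _ (fun i _ => mul_nonneg (hεpos i) (sq_nonneg _)) hsum
  have hS_tendsto : Tendsto (fun n => ∑ r ∈ Finset.range n, ε r * a r ^ 2)
      atTop (nhds T) := hsum.hasSum.tendsto_sum_nat
  -- tail bound
  have htail : ∀ η : ℝ, 0 < η → ∃ N, ∀ n, N ≤ n → ∀ m,
      ∑ k ∈ Finset.Ico n m, ε k * a k ^ 2 ≤ η := by
    intro η hη
    obtain ⟨N, hN⟩ := eventually_atTop.1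
      (hS_tendsto.eventually (eventually_gt_nhds (by linarith : T - η < T)))
    refine ⟨N, fun n hn m => ?_⟩
    rcases le_or_gt m n with h | h
    · rw [Finset.Ico_eq_empty (by omega)]
      simp [hη.le]
    · have hsplit := Finset.sum_range_add_sum_Ico (fun r => ε r * a r ^ 2) h.le
      have h1 := hN n hn
      have h2 := hS_le m
      linarith
  -- Step E : one-step growth bound on a
  set C : ℝ := Lc * Real.sqrt cu with hCdef
  have hC0 : 0 ≤ C := mul_nonneg hLc (Real.sqrt_nonneg _)
  have hgbound : ∀ r, ‖g r‖ ≤ Real.sqrt cu * a r := by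
    intro r
    calc ‖g r‖ = Real.sqrt (‖g r‖ ^ 2) := (Real.sqrt_sq (norm_nonneg _)).symm
      _ ≤ Real.sqrt (cu * a r ^ 2) := Real.sqrt_le_sqrt (hA2 r)
      _ = Real.sqrt cu * a r := by
          rw [Real.sqrt_mul hcu.le, Real.sqrt_sq (ha0 r)]
  have hE : ∀ r, a (r + 1) ≤ a r + C * (ε r * a r) := by
    intro r
    have h1 : a (r + 1) - a r ≤ ‖gradient L (θ (r + 1)) - gradient L (θ r)‖ :=
      norm_sub_norm_le _ _
    have h2 : ‖gradient L (θ (r + 1)) - gradient L (θ r)‖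
        ≤ Lc * ‖θ (r + 1) - θ r‖ := hlip _ _
    have h3 : ‖θ (r + 1) - θ r‖ = ε r * ‖g r‖ := by
      rw [hupd r]
      rw [show θ r - ε r • g r - θ r = -(ε r • g r) by abel]
      rw [norm_neg, norm_smul, Real.norm_eq_abs, abs_of_nonneg (hεpos r)]
    have h4 := hgbound r
    have := mul_le_mul_of_nonneg_left (mul_le_mul_of_nonneg_left h4 (hεpos r)) hLc
    rw [hCdef]
    nlinarith [this]
  -- Step F : multi-step bound
  have hF : ∀ n m, n ≤ m → a m ≤ a n + C * ∑ k ∈ Finset.Ico n m, ε k * a k := by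
    intro n m hnm
    induction m, hnm using Nat.le_induction with
    | base => simp
    | succ m hm ih =>
      rw [Finset.sum_Ico_succ_top hm]
      have h1 := hE m
      have h2 : C * (ε m * a m) ≤ C * (ε m * a m) := le_refl _
      have := mul_le_mul_of_nonneg_left (le_refl (ε m * a m)) hC0
      nlinarith [hE m, ih]
  -- Step G : a dips below every δ infinitely often
  have hG : ∀ δ : ℝ, 0 < δ → ∀ N, ∃ n, N ≤ n ∧ a n ≤ δ := by
    intro δ hδ N
    by_contra hcon
    push_neg at hcon
    have hεsummable : Summable ε := by
      have hs1 : Summable (fun n => ε (n + N) * a (n + N) ^ 2) :=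
        (summable_nat_add_iff N).2 hsum
      have hs2 : Summable (fun n => (1 / δ ^ 2) * (ε (n + N) * a (n + N) ^ 2)) :=
        hs1.mul_left _
      have hs3 : Summable (fun n => ε (n + N)) := by
        apply Summable.of_nonneg_of_le (fun n => hεpos _) _ hs2
        intro n
        have hd : δ < a (n + N) := hcon (n + N) (Nat.le_add_left _ _)
        have h1 : δ ^ 2 ≤ a (n + N) ^ 2 := by nlinarith
        have h2 : ε (n + N) * δ ^ 2 ≤ ε (n + N) * a (n + N) ^ 2 :=
          mul_le_mul_of_nonneg_left h1 (hεpos _)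
        rw [div_mul_eq_mul_div, one_mul, le_div_iff₀ (by positivity)]
        linarith
      exact (summable_nat_add_iff N).1 hs3
    exact not_tendsto_atTop_of_tendsto_nhds hεsummable.hasSum.tendsto_sum_nat hεsum
  -- Final step
  have key : Tendsto a atTop (nhds 0) := by
    rw [Metric.tendsto_atTop]
    intro EE hEE
    set δ : ℝ := EE / 3 with hδdef
    have hδ : 0 < δ := by positivity
    set β : ℝ := 1 / (2 * (C + 1)) with hβdef
    have hβ : 0 < β := by positivity
    have h2cb : 2 * C * β ≤ 1 := by
      rw [hβdef]
      rw [mul_one_div, div_le_one (by positivity)]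
      linarith
    obtain ⟨N1, hN1⟩ : ∃ N1, ∀ k, N1 ≤ k → ε k ≤ β :=
      eventually_atTop.1 (hε0.eventually (eventually_le_nhds hβ))
    obtain ⟨N2, hN2⟩ := htail (δ ^ 2 * β) (by positivity)
    obtain ⟨n, hnN, han⟩ := hG δ hδ (max N1 N2)
    have hnN1 : N1 ≤ n := le_trans (le_max_left _ _) hnN
    have hnN2 : N2 ≤ n := le_trans (le_max_right _ _) hnN
    refine ⟨n, fun m hm => ?_⟩
    have hclaim : a m ≤ 2 * δ := by
      by_cases hsmall : a m ≤ δ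
      · linarith
      push_neg at hsmall
      have hmn : n < m := by
        rcases lt_or_eq_of_le hm with h | h
        · exact h
        · exfalso; rw [← h] at hsmall; linarith
      have hm1 : n ≤ m - 1 := Nat.le_sub_one_of_lt hmn
      set P : ℕ → Prop := fun k => a k ≤ δ with hP
      set n' : ℕ := Nat.findGreatest P (m - 1) with hn'
      have hPn : P n := han
      have hn'ge : n ≤ n' := Nat.le_findGreatest hm1 hPn
      have hPn' : P n' := Nat.findGreatest_spec hm1 hPn
      have hn'le : n' ≤ m - 1 := Nat.findGreatest_le _
      have hn'm : n' < m := lt_of_le_of_lt hn'le (by omega)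
      have hbig : ∀ k, n' < k → k < m → δ < a k := by
        intro k hk1 hk2
        have : ¬ P k := Nat.findGreatest_is_greatest hk1 (by omega)
        simpa [hP] using lt_of_not_ge this
      have hFm := hF n' m hn'm.le
      have hsplit : ∑ k ∈ Finset.Ico n' m, ε k * a k
          = ε n' * a n' + ∑ k ∈ Finset.Ico (n' + 1) m, ε k * a k :=
        Finset.sum_eq_sum_Ico_succ_bot hn'm _
      have ht1 : ε n' * a n' ≤ β * δ := by
        have h1 : ε n' ≤ β := hN1 n' (le_trans hnN1 hn'ge)
        have h2 : a n' ≤ δ := hPn'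
        exact mul_le_mul h1 h2 (ha0 _) hβ.le
      have ht2 : ∑ k ∈ Finset.Ico (n' + 1) m, ε k * a k ≤ δ * β := by
        have hterm : ∀ k ∈ Finset.Ico (n' + 1) m, ε k * a k
            ≤ (1 / δ) * (ε k * a k ^ 2) := by
          intro k hk
          rw [Finset.mem_Ico] at hk
          have hak : δ < a k := hbig k (by omega) hk.2
          rw [div_mul_eq_mul_div, one_mul, le_div_iff₀ hδ]
          have : ε k * (a k * δ) ≤ ε k * (a k * a k) :=
            mul_le_mul_of_nonneg_left
              (mul_le_mul_of_nonneg_left hak.le (ha0 k)) (hεpos k)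
          nlinarith [this]
        calc ∑ k ∈ Finset.Ico (n' + 1) m, ε k * a k
            ≤ ∑ k ∈ Finset.Ico (n' + 1) m, (1 / δ) * (ε k * a k ^ 2) :=
              Finset.sum_le_sum hterm
          _ = (1 / δ) * ∑ k ∈ Finset.Ico (n' + 1) m, ε k * a k ^ 2 := by
              rw [Finset.mul_sum]
          _ ≤ (1 / δ) * (δ ^ 2 * β) := by
              apply mul_le_mul_of_nonneg_left _ (by positivity)
              exact hN2 (n' + 1) (by omega) m
          _ = δ * β := by field_simp
      have han' : a n' ≤ δ := hPn'
      have hsum_le : ∑ k ∈ Finset.Ico n' m, ε k * a k ≤ β * δ + δ * β := by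
        rw [hsplit]; linarith
      have : C * ∑ k ∈ Finset.Ico n' m, ε k * a k ≤ C * (β * δ + δ * β) :=
        mul_le_mul_of_nonneg_left hsum_le hC0
      nlinarith [this, hFm, hδ]
    have : dist (a m) 0 = a m := by
      rw [Real.dist_eq, sub_zero, abs_of_nonneg (ha0 m)]
    rw [this]
    rw [hδdef] at hclaim
    linarith
  rw [tendsto_zero_iff_norm_tendsto_zero]
  exact key
end
end
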